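/- Let n ≥ 1 and let x be an orthogonal linear transformation of ℝ^{4n}. If the pullback of Φ_qK by x satisfies Φ_qK ∘ x = λ · Φ_qK for some real number λ (where (Φ_qK ∘ x)(x₁,x₂,x₃,x₄) = Φ_qK(x x₁, x x₂, x x₃, x x₄)), then λ = 1 or λ = −1. -/

import Mathlib

open scoped RealInnerProductSpace Kronecker

noncomputable section

/-- `V = ℝ^{4n}`, written with the block index set `Fin 4 × Fin n` (four blocks of size `n`). -/
abbrev Vq (n : ℕ) := EuclideanSpace ℝ (Fin 4 × Fin n)

/-- The 4×4 coefficient matrix of the block matrix `I`. -/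
def I4 : Matrix (Fin 4) (Fin 4) ℝ := !![0,-1,0,0; 1,0,0,0; 0,0,0,-1; 0,0,1,0]

/-- The 4×4 coefficient matrix of the block matrix `J`. -/
def J4 : Matrix (Fin 4) (Fin 4) ℝ := !![0,0,-1,0; 0,0,0,1; 1,0,0,0; 0,-1,0,0]

/-- The 4×4 coefficient matrix of the block matrix `K`. -/
def K4 : Matrix (Fin 4) (Fin 4) ℝ := !![0,0,0,-1; 0,0,-1,0; 0,1,0,0; 1,0,0,0]

/-- The almost complex structure `I` on `ℝ^{4n}`, given in `n×n` block form by
`[[0,−E,0,0],[E,0,0,0],[0,0,0,−E],[0,0,E,0]]` (the Kronecker product `I4 ⊗ E`). -/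
def Iq (n : ℕ) : Module.End ℝ (Vq n) :=
  Matrix.toEuclideanLin (I4 ⊗ₖ (1 : Matrix (Fin n) (Fin n) ℝ))

/-- The almost complex structure `J` on `ℝ^{4n}`. -/
def Jq (n : ℕ) : Module.End ℝ (Vq n) :=
  Matrix.toEuclideanLin (J4 ⊗ₖ (1 : Matrix (Fin n) (Fin n) ℝ))

/-- The almost complex structure `K` on `ℝ^{4n}`. -/
def Kq (n : ℕ) : Module.End ℝ (Vq n) :=
  Matrix.toEuclideanLin (K4 ⊗ₖ (1 : Matrix (Fin n) (Fin n) ℝ))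

/-- `𝔰𝔭(n) = {A ∈ 𝔰𝔬(4n) : AI = IA, AJ = JA, AK = KA}`. -/
def spn (n : ℕ) : Submodule ℝ (Module.End ℝ (Vq n)) where
  carrier := {A | (∀ x y : Vq n, ⟪A x, y⟫ = -⟪x, A y⟫) ∧
    A * Iq n = Iq n * A ∧ A * Jq n = Jq n * A ∧ A * Kq n = Kq n * A}
  add_mem' := by
    rintro a b ⟨ha, hai, haj, hak⟩ ⟨hb, hbi, hbj, hbk⟩
    refine ⟨fun x y => ?_, ?_, ?_, ?_⟩
    · simp only [LinearMap.add_apply, inner_add_left, inner_add_right, ha x y, hb x y]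
      ring
    · rw [add_mul, mul_add, hai, hbi]
    · rw [add_mul, mul_add, haj, hbj]
    · rw [add_mul, mul_add, hak, hbk]
  zero_mem' := by
    refine ⟨fun x y => by simp, by simp [zero_mul, mul_zero], by simp [zero_mul, mul_zero],
      by simp [zero_mul, mul_zero]⟩
  smul_mem' := by
    rintro c a ⟨ha, hai, haj, hak⟩
    refine ⟨fun x y => ?_, ?_, ?_, ?_⟩
    · simp only [LinearMap.smul_apply, real_inner_smul_left, real_inner_smul_right, ha x y]
      ring
    · ext x
      have h := LinearMap.congr_fun hai x
      simp only [Module.End.mul_apply, LinearMap.smul_apply, map_smul] at *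
      rw [h]
    · ext x
      have h := LinearMap.congr_fun haj x
      simp only [Module.End.mul_apply, LinearMap.smul_apply, map_smul] at *
      rw [h]
    · ext x
      have h := LinearMap.congr_fun hak x
      simp only [Module.End.mul_apply, LinearMap.smul_apply, map_smul] at *
      rw [h]

/-- `𝔰𝔭(1) = span{I, J, K}`. -/
def sp1 (n : ℕ) : Submodule ℝ (Module.End ℝ (Vq n)) :=
  Submodule.span ℝ {Iq n, Jq n, Kq n}

/-- The wedge product of a `k`-form and an `l`-form (determinant convention):
`(f ∧ g)(x₁,…,x_{k+l}) = (k! l!)⁻¹ Σ_σ sgn(σ) f(x_{σ(1)},…,x_{σ(k)}) g(x_{σ(k+1)},…,x_{σ(k+l)})`. -/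
def wedgeF {E : Type*} {k l : ℕ} (f : (Fin k → E) → ℝ) (g : (Fin l → E) → ℝ) :
    (Fin (k + l) → E) → ℝ :=
  fun x => ((k.factorial * l.factorial : ℕ) : ℝ)⁻¹ *
    ∑ σ : Equiv.Perm (Fin (k + l)),
      ((Equiv.Perm.sign σ : ℤ) : ℝ) *
        (f (fun i => x (σ (Fin.castAdd l i))) * g (fun j => x (σ (Fin.natAdd k j))))

/-- The 2-form `ω_I(x, y) = g₀(Ix, y)`. -/
def omIf (n : ℕ) : (Fin 2 → Vq n) → ℝ := fun x => ⟪Iq n (x 0), x 1⟫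

/-- The 2-form `ω_J(x, y) = g₀(Jx, y)`. -/
def omJf (n : ℕ) : (Fin 2 → Vq n) → ℝ := fun x => ⟪Jq n (x 0), x 1⟫

/-- The 2-form `ω_K(x, y) = g₀(Kx, y)`. -/
def omKf (n : ℕ) : (Fin 2 → Vq n) → ℝ := fun x => ⟪Kq n (x 0), x 1⟫

/-- The fundamental 4-form `Φ_qK = ω_I ∧ ω_I + ω_J ∧ ω_J + ω_K ∧ ω_K`. -/
def PhiqK (n : ℕ) : (Fin 4 → Vq n) → ℝ :=
  fun x => wedgeF (omIf n) (omIf n) x + wedgeF (omJf n) (omJf n) x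
    + wedgeF (omKf n) (omKf n) x


/-! ### Auxiliary machinery -/

section Aux

open Equiv Equiv.Perm

lemma sum_perm_four {M : Type*} [AddCommMonoid M] (F : Equiv.Perm (Fin 4) → M) :
    ∑ σ : Equiv.Perm (Fin 4), F σ =
      ∑ i : Fin 4, ∑ j : Fin 3, ∑ k : Fin 2,
        F (decomposeFin.symm (i, decomposeFin.symm (j, decomposeFin.symm (k, 1)))) := by
  rw [← Equiv.sum_comp (decomposeFin.symm : Fin 4 × Perm (Fin 3) ≃ _), Fintype.sum_prod_type]
  congr 1; ext i
  rw [← Equiv.sum_comp (decomposeFin.symm : Fin 3 × Perm (Fin 2) ≃ _), Fintype.sum_prod_type]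
  congr 1; ext j
  rw [← Equiv.sum_comp (decomposeFin.symm : Fin 2 × Perm (Fin 1) ≃ _), Fintype.sum_prod_type]
  congr 1; ext k
  haveI : Subsingleton (Equiv.Perm (Fin 1)) :=
    ⟨fun a b => Equiv.ext fun x => Subsingleton.elim _ _⟩
  exact Fintype.sum_subsingleton _ 1

lemma Wsum (M N : Fin 4 → Fin 4 → ℝ) :
    ∑ σ : Equiv.Perm (Fin 4), ((Equiv.Perm.sign σ : ℤ) : ℝ) * (M (σ 0) (σ 1) * N (σ 2) (σ 3)) =
      M 0 1 * N 2 3 - M 0 1 * N 3 2 - M 0 2 * N 1 3 + M 0 2 * N 3 1 - M 0 3 * N 2 1 + M 0 3 * N 1 2 - M 1 0 * N 2 3 + M 1 0 * N 3 2 + M 1 2 * N 0 3 - M 1 2 * N 3 0 + M 1 3 * N 2 0 - M 1 3 * N 0 2 - M 2 1 * N 0 3 + M 2 1 * N 3 0 + M 2 0 * N 1 3 - M 2 0 * N 3 1 + M 2 3 * N 0 1 - M 2 3 * N 1 0 - M 3 1 * N 2 0 + M 3 1 * N 0 2 + M 3 2 * N 1 0 - M 3 2 * N 0 1 + M 3 0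 * N 2 1 - M 3 0 * N 1 2 := by
  rw [sum_perm_four]
  simp only [Fin.sum_univ_four, Fin.sum_univ_three, Fin.sum_univ_two,
    (show Equiv.Perm.sign (Equiv.Perm.decomposeFin.symm ((0:Fin 4), Equiv.Perm.decomposeFin.symm ((0:Fin 3), Equiv.Perm.decomposeFin.symm ((0:Fin 2), 1)))) = 1 from by decide),
    (show (Equiv.Perm.decomposeFin.symm ((0:Fin 4), Equiv.Perm.decomposeFin.symm ((0:Fin 3), Equiv.Perm.decomposeFin.symm ((0:Fin 2), 1)))) (0:Fin 4) = 0 from by decide),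
    (show (Equiv.Perm.decomposeFin.symm ((0:Fin 4), Equiv.Perm.decomposeFin.symm ((0:Fin 3), Equiv.Perm.decomposeFin.symm ((0:Fin 2), 1)))) (1:Fin 4) = 1 from by decide),
    (show (Equiv.Perm.decomposeFin.symm ((0:Fin 4), Equiv.Perm.decomposeFin.symm ((0:Fin 3), Equiv.Perm.decomposeFin.symm ((0:Fin 2), 1)))) (2:Fin 4) = 2 from by decide),
    (show (Equiv.Perm.decomposeFin.symm ((0:Fin 4), Equiv.Perm.decomposeFin.symm ((0:Fin 3), Equiv.Perm.decomposeFin.symm ((0:Fin 2), 1)))) (3:Fin 4) = 3 from by decide),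
    (show Equiv.Perm.sign (Equiv.Perm.decomposeFin.symm ((0:Fin 4), Equiv.Perm.decomposeFin.symm ((0:Fin 3), Equiv.Perm.decomposeFin.symm ((1:Fin 2), 1)))) = -1 from by decide),
    (show (Equiv.Perm.decomposeFin.symm ((0:Fin 4), Equiv.Perm.decomposeFin.symm ((0:Fin 3), Equiv.Perm.decomposeFin.symm ((1:Fin 2), 1)))) (0:Fin 4) = 0 from by decide),
    (show (Equiv.Perm.decomposeFin.symm ((0:Fin 4), Equiv.Perm.decomposeFin.symm ((0:Fin 3), Equiv.Perm.decomposeFin.symm ((1:Fin 2), 1)))) (1:Fin 4) = 1 from by decide),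
    (show (Equiv.Perm.decomposeFin.symm ((0:Fin 4), Equiv.Perm.decomposeFin.symm ((0:Fin 3), Equiv.Perm.decomposeFin.symm ((1:Fin 2), 1)))) (2:Fin 4) = 3 from by decide),
    (show (Equiv.Perm.decomposeFin.symm ((0:Fin 4), Equiv.Perm.decomposeFin.symm ((0:Fin 3), Equiv.Perm.decomposeFin.symm ((1:Fin 2), 1)))) (3:Fin 4) = 2 from by decide),
    (show Equiv.Perm.sign (Equiv.Perm.decomposeFin.symm ((0:Fin 4), Equiv.Perm.decomposeFin.symm ((1:Fin 3), Equiv.Perm.decomposeFin.symm ((0:Fin 2), 1)))) = -1 from by decide),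
    (show (Equiv.Perm.decomposeFin.symm ((0:Fin 4), Equiv.Perm.decomposeFin.symm ((1:Fin 3), Equiv.Perm.decomposeFin.symm ((0:Fin 2), 1)))) (0:Fin 4) = 0 from by decide),
    (show (Equiv.Perm.decomposeFin.symm ((0:Fin 4), Equiv.Perm.decomposeFin.symm ((1:Fin 3), Equiv.Perm.decomposeFin.symm ((0:Fin 2), 1)))) (1:Fin 4) = 2 from by decide),
    (show (Equiv.Perm.decomposeFin.symm ((0:Fin 4), Equiv.Perm.decomposeFin.symm ((1:Fin 3), Equiv.Perm.decomposeFin.symm ((0:Fin 2), 1)))) (2:Fin 4) = 1 from by decide),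
    (show (Equiv.Perm.decomposeFin.symm ((0:Fin 4), Equiv.Perm.decomposeFin.symm ((1:Fin 3), Equiv.Perm.decomposeFin.symm ((0:Fin 2), 1)))) (3:Fin 4) = 3 from by decide),
    (show Equiv.Perm.sign (Equiv.Perm.decomposeFin.symm ((0:Fin 4), Equiv.Perm.decomposeFin.symm ((1:Fin 3), Equiv.Perm.decomposeFin.symm ((1:Fin 2), 1)))) = 1 from by decide),
    (show (Equiv.Perm.decomposeFin.symm ((0:Fin 4), Equiv.Perm.decomposeFin.symm ((1:Fin 3), Equiv.Perm.decomposeFin.symm ((1:Fin 2), 1)))) (0:Fin 4) = 0 from by decide),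
    (show (Equiv.Perm.decomposeFin.symm ((0:Fin 4), Equiv.Perm.decomposeFin.symm ((1:Fin 3), Equiv.Perm.decomposeFin.symm ((1:Fin 2), 1)))) (1:Fin 4) = 2 from by decide),
    (show (Equiv.Perm.decomposeFin.symm ((0:Fin 4), Equiv.Perm.decomposeFin.symm ((1:Fin 3), Equiv.Perm.decomposeFin.symm ((1:Fin 2), 1)))) (2:Fin 4) = 3 from by decide),
    (show (Equiv.Perm.decomposeFin.symm ((0:Fin 4), Equiv.Perm.decomposeFin.symm ((1:Fin 3), Equiv.Perm.decomposeFin.symm ((1:Fin 2), 1)))) (3:Fin 4) = 1 from by decide),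
    (show Equiv.Perm.sign (Equiv.Perm.decomposeFin.symm ((0:Fin 4), Equiv.Perm.decomposeFin.symm ((2:Fin 3), Equiv.Perm.decomposeFin.symm ((0:Fin 2), 1)))) = -1 from by decide),
    (show (Equiv.Perm.decomposeFin.symm ((0:Fin 4), Equiv.Perm.decomposeFin.symm ((2:Fin 3), Equiv.Perm.decomposeFin.symm ((0:Fin 2), 1)))) (0:Fin 4) = 0 from by decide),
    (show (Equiv.Perm.decomposeFin.symm ((0:Fin 4), Equiv.Perm.decomposeFin.symm ((2:Fin 3), Equiv.Perm.decomposeFin.symm ((0:Fin 2), 1)))) (1:Fin 4) = 3 from by decide),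
    (show (Equiv.Perm.decomposeFin.symm ((0:Fin 4), Equiv.Perm.decomposeFin.symm ((2:Fin 3), Equiv.Perm.decomposeFin.symm ((0:Fin 2), 1)))) (2:Fin 4) = 2 from by decide),
    (show (Equiv.Perm.decomposeFin.symm ((0:Fin 4), Equiv.Perm.decomposeFin.symm ((2:Fin 3), Equiv.Perm.decomposeFin.symm ((0:Fin 2), 1)))) (3:Fin 4) = 1 from by decide),
    (show Equiv.Perm.sign (Equiv.Perm.decomposeFin.symm ((0:Fin 4), Equiv.Perm.decomposeFin.symm ((2:Fin 3), Equiv.Perm.decomposeFin.symm ((1:Fin 2), 1)))) = 1 from by decide),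
    (show (Equiv.Perm.decomposeFin.symm ((0:Fin 4), Equiv.Perm.decomposeFin.symm ((2:Fin 3), Equiv.Perm.decomposeFin.symm ((1:Fin 2), 1)))) (0:Fin 4) = 0 from by decide),
    (show (Equiv.Perm.decomposeFin.symm ((0:Fin 4), Equiv.Perm.decomposeFin.symm ((2:Fin 3), Equiv.Perm.decomposeFin.symm ((1:Fin 2), 1)))) (1:Fin 4) = 3 from by decide),
    (show (Equiv.Perm.decomposeFin.symm ((0:Fin 4), Equiv.Perm.decomposeFin.symm ((2:Fin 3), Equiv.Perm.decomposeFin.symm ((1:Fin 2), 1)))) (2:Fin 4) = 1 from by decide),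
    (show (Equiv.Perm.decomposeFin.symm ((0:Fin 4), Equiv.Perm.decomposeFin.symm ((2:Fin 3), Equiv.Perm.decomposeFin.symm ((1:Fin 2), 1)))) (3:Fin 4) = 2 from by decide),
    (show Equiv.Perm.sign (Equiv.Perm.decomposeFin.symm ((1:Fin 4), Equiv.Perm.decomposeFin.symm ((0:Fin 3), Equiv.Perm.decomposeFin.symm ((0:Fin 2), 1)))) = -1 from by decide),
    (show (Equiv.Perm.decomposeFin.symm ((1:Fin 4), Equiv.Perm.decomposeFin.symm ((0:Fin 3), Equiv.Perm.decomposeFin.symm ((0:Fin 2), 1)))) (0:Fin 4) = 1 from by decide),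
    (show (Equiv.Perm.decomposeFin.symm ((1:Fin 4), Equiv.Perm.decomposeFin.symm ((0:Fin 3), Equiv.Perm.decomposeFin.symm ((0:Fin 2), 1)))) (1:Fin 4) = 0 from by decide),
    (show (Equiv.Perm.decomposeFin.symm ((1:Fin 4), Equiv.Perm.decomposeFin.symm ((0:Fin 3), Equiv.Perm.decomposeFin.symm ((0:Fin 2), 1)))) (2:Fin 4) = 2 from by decide),
    (show (Equiv.Perm.decomposeFin.symm ((1:Fin 4), Equiv.Perm.decomposeFin.symm ((0:Fin 3), Equiv.Perm.decomposeFin.symm ((0:Fin 2), 1)))) (3:Fin 4) = 3 from by decide),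
    (show Equiv.Perm.sign (Equiv.Perm.decomposeFin.symm ((1:Fin 4), Equiv.Perm.decomposeFin.symm ((0:Fin 3), Equiv.Perm.decomposeFin.symm ((1:Fin 2), 1)))) = 1 from by decide),
    (show (Equiv.Perm.decomposeFin.symm ((1:Fin 4), Equiv.Perm.decomposeFin.symm ((0:Fin 3), Equiv.Perm.decomposeFin.symm ((1:Fin 2), 1)))) (0:Fin 4) = 1 from by decide),
    (show (Equiv.Perm.decomposeFin.symm ((1:Fin 4), Equiv.Perm.decomposeFin.symm ((0:Fin 3), Equiv.Perm.decomposeFin.symm ((1:Fin 2), 1)))) (1:Fin 4) = 0 from by decide),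
    (show (Equiv.Perm.decomposeFin.symm ((1:Fin 4), Equiv.Perm.decomposeFin.symm ((0:Fin 3), Equiv.Perm.decomposeFin.symm ((1:Fin 2), 1)))) (2:Fin 4) = 3 from by decide),
    (show (Equiv.Perm.decomposeFin.symm ((1:Fin 4), Equiv.Perm.decomposeFin.symm ((0:Fin 3), Equiv.Perm.decomposeFin.symm ((1:Fin 2), 1)))) (3:Fin 4) = 2 from by decide),
    (show Equiv.Perm.sign (Equiv.Perm.decomposeFin.symm ((1:Fin 4), Equiv.Perm.decomposeFin.symm ((1:Fin 3), Equiv.Perm.decomposeFin.symm ((0:Fin 2), 1)))) = 1 from by decide),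
    (show (Equiv.Perm.decomposeFin.symm ((1:Fin 4), Equiv.Perm.decomposeFin.symm ((1:Fin 3), Equiv.Perm.decomposeFin.symm ((0:Fin 2), 1)))) (0:Fin 4) = 1 from by decide),
    (show (Equiv.Perm.decomposeFin.symm ((1:Fin 4), Equiv.Perm.decomposeFin.symm ((1:Fin 3), Equiv.Perm.decomposeFin.symm ((0:Fin 2), 1)))) (1:Fin 4) = 2 from by decide),
    (show (Equiv.Perm.decomposeFin.symm ((1:Fin 4), Equiv.Perm.decomposeFin.symm ((1:Fin 3), Equiv.Perm.decomposeFin.symm ((0:Fin 2), 1)))) (2:Fin 4) = 0 from by decide),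
    (show (Equiv.Perm.decomposeFin.symm ((1:Fin 4), Equiv.Perm.decomposeFin.symm ((1:Fin 3), Equiv.Perm.decomposeFin.symm ((0:Fin 2), 1)))) (3:Fin 4) = 3 from by decide),
    (show Equiv.Perm.sign (Equiv.Perm.decomposeFin.symm ((1:Fin 4), Equiv.Perm.decomposeFin.symm ((1:Fin 3), Equiv.Perm.decomposeFin.symm ((1:Fin 2), 1)))) = -1 from by decide),
    (show (Equiv.Perm.decomposeFin.symm ((1:Fin 4), Equiv.Perm.decomposeFin.symm ((1:Fin 3), Equiv.Perm.decomposeFin.symm ((1:Fin 2), 1)))) (0:Fin 4) = 1 from by decide),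
    (show (Equiv.Perm.decomposeFin.symm ((1:Fin 4), Equiv.Perm.decomposeFin.symm ((1:Fin 3), Equiv.Perm.decomposeFin.symm ((1:Fin 2), 1)))) (1:Fin 4) = 2 from by decide),
    (show (Equiv.Perm.decomposeFin.symm ((1:Fin 4), Equiv.Perm.decomposeFin.symm ((1:Fin 3), Equiv.Perm.decomposeFin.symm ((1:Fin 2), 1)))) (2:Fin 4) = 3 from by decide),
    (show (Equiv.Perm.decomposeFin.symm ((1:Fin 4), Equiv.Perm.decomposeFin.symm ((1:Fin 3), Equiv.Perm.decomposeFin.symm ((1:Fin 2), 1)))) (3:Fin 4) = 0 from by decide),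
    (show Equiv.Perm.sign (Equiv.Perm.decomposeFin.symm ((1:Fin 4), Equiv.Perm.decomposeFin.symm ((2:Fin 3), Equiv.Perm.decomposeFin.symm ((0:Fin 2), 1)))) = 1 from by decide),
    (show (Equiv.Perm.decomposeFin.symm ((1:Fin 4), Equiv.Perm.decomposeFin.symm ((2:Fin 3), Equiv.Perm.decomposeFin.symm ((0:Fin 2), 1)))) (0:Fin 4) = 1 from by decide),
    (show (Equiv.Perm.decomposeFin.symm ((1:Fin 4), Equiv.Perm.decomposeFin.symm ((2:Fin 3), Equiv.Perm.decomposeFin.symm ((0:Fin 2), 1)))) (1:Fin 4) = 3 from by decide),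
    (show (Equiv.Perm.decomposeFin.symm ((1:Fin 4), Equiv.Perm.decomposeFin.symm ((2:Fin 3), Equiv.Perm.decomposeFin.symm ((0:Fin 2), 1)))) (2:Fin 4) = 2 from by decide),
    (show (Equiv.Perm.decomposeFin.symm ((1:Fin 4), Equiv.Perm.decomposeFin.symm ((2:Fin 3), Equiv.Perm.decomposeFin.symm ((0:Fin 2), 1)))) (3:Fin 4) = 0 from by decide),
    (show Equiv.Perm.sign (Equiv.Perm.decomposeFin.symm ((1:Fin 4), Equiv.Perm.decomposeFin.symm ((2:Fin 3), Equiv.Perm.decomposeFin.symm ((1:Fin 2), 1)))) = -1 from by decide),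
    (show (Equiv.Perm.decomposeFin.symm ((1:Fin 4), Equiv.Perm.decomposeFin.symm ((2:Fin 3), Equiv.Perm.decomposeFin.symm ((1:Fin 2), 1)))) (0:Fin 4) = 1 from by decide),
    (show (Equiv.Perm.decomposeFin.symm ((1:Fin 4), Equiv.Perm.decomposeFin.symm ((2:Fin 3), Equiv.Perm.decomposeFin.symm ((1:Fin 2), 1)))) (1:Fin 4) = 3 from by decide),
    (show (Equiv.Perm.decomposeFin.symm ((1:Fin 4), Equiv.Perm.decomposeFin.symm ((2:Fin 3), Equiv.Perm.decomposeFin.symm ((1:Fin 2), 1)))) (2:Fin 4) = 0 from by decide),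
    (show (Equiv.Perm.decomposeFin.symm ((1:Fin 4), Equiv.Perm.decomposeFin.symm ((2:Fin 3), Equiv.Perm.decomposeFin.symm ((1:Fin 2), 1)))) (3:Fin 4) = 2 from by decide),
    (show Equiv.Perm.sign (Equiv.Perm.decomposeFin.symm ((2:Fin 4), Equiv.Perm.decomposeFin.symm ((0:Fin 3), Equiv.Perm.decomposeFin.symm ((0:Fin 2), 1)))) = -1 from by decide),
    (show (Equiv.Perm.decomposeFin.symm ((2:Fin 4), Equiv.Perm.decomposeFin.symm ((0:Fin 3), Equiv.Perm.decomposeFin.symm ((0:Fin 2), 1)))) (0:Fin 4) = 2 from by decide),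
    (show (Equiv.Perm.decomposeFin.symm ((2:Fin 4), Equiv.Perm.decomposeFin.symm ((0:Fin 3), Equiv.Perm.decomposeFin.symm ((0:Fin 2), 1)))) (1:Fin 4) = 1 from by decide),
    (show (Equiv.Perm.decomposeFin.symm ((2:Fin 4), Equiv.Perm.decomposeFin.symm ((0:Fin 3), Equiv.Perm.decomposeFin.symm ((0:Fin 2), 1)))) (2:Fin 4) = 0 from by decide),
    (show (Equiv.Perm.decomposeFin.symm ((2:Fin 4), Equiv.Perm.decomposeFin.symm ((0:Fin 3), Equiv.Perm.decomposeFin.symm ((0:Fin 2), 1)))) (3:Fin 4) = 3 from by decide),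
    (show Equiv.Perm.sign (Equiv.Perm.decomposeFin.symm ((2:Fin 4), Equiv.Perm.decomposeFin.symm ((0:Fin 3), Equiv.Perm.decomposeFin.symm ((1:Fin 2), 1)))) = 1 from by decide),
    (show (Equiv.Perm.decomposeFin.symm ((2:Fin 4), Equiv.Perm.decomposeFin.symm ((0:Fin 3), Equiv.Perm.decomposeFin.symm ((1:Fin 2), 1)))) (0:Fin 4) = 2 from by decide),
    (show (Equiv.Perm.decomposeFin.symm ((2:Fin 4), Equiv.Perm.decomposeFin.symm ((0:Fin 3), Equiv.Perm.decomposeFin.symm ((1:Fin 2), 1)))) (1:Fin 4) = 1 from by decide),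
    (show (Equiv.Perm.decomposeFin.symm ((2:Fin 4), Equiv.Perm.decomposeFin.symm ((0:Fin 3), Equiv.Perm.decomposeFin.symm ((1:Fin 2), 1)))) (2:Fin 4) = 3 from by decide),
    (show (Equiv.Perm.decomposeFin.symm ((2:Fin 4), Equiv.Perm.decomposeFin.symm ((0:Fin 3), Equiv.Perm.decomposeFin.symm ((1:Fin 2), 1)))) (3:Fin 4) = 0 from by decide),
    (show Equiv.Perm.sign (Equiv.Perm.decomposeFin.symm ((2:Fin 4), Equiv.Perm.decomposeFin.symm ((1:Fin 3), Equiv.Perm.decomposeFin.symm ((0:Fin 2), 1)))) = 1 from by decide),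
    (show (Equiv.Perm.decomposeFin.symm ((2:Fin 4), Equiv.Perm.decomposeFin.symm ((1:Fin 3), Equiv.Perm.decomposeFin.symm ((0:Fin 2), 1)))) (0:Fin 4) = 2 from by decide),
    (show (Equiv.Perm.decomposeFin.symm ((2:Fin 4), Equiv.Perm.decomposeFin.symm ((1:Fin 3), Equiv.Perm.decomposeFin.symm ((0:Fin 2), 1)))) (1:Fin 4) = 0 from by decide),
    (show (Equiv.Perm.decomposeFin.symm ((2:Fin 4), Equiv.Perm.decomposeFin.symm ((1:Fin 3), Equiv.Perm.decomposeFin.symm ((0:Fin 2), 1)))) (2:Fin 4) = 1 from by decide),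
    (show (Equiv.Perm.decomposeFin.symm ((2:Fin 4), Equiv.Perm.decomposeFin.symm ((1:Fin 3), Equiv.Perm.decomposeFin.symm ((0:Fin 2), 1)))) (3:Fin 4) = 3 from by decide),
    (show Equiv.Perm.sign (Equiv.Perm.decomposeFin.symm ((2:Fin 4), Equiv.Perm.decomposeFin.symm ((1:Fin 3), Equiv.Perm.decomposeFin.symm ((1:Fin 2), 1)))) = -1 from by decide),
    (show (Equiv.Perm.decomposeFin.symm ((2:Fin 4), Equiv.Perm.decomposeFin.symm ((1:Fin 3), Equiv.Perm.decomposeFin.symm ((1:Fin 2), 1)))) (0:Fin 4) = 2 from by decide),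
    (show (Equiv.Perm.decomposeFin.symm ((2:Fin 4), Equiv.Perm.decomposeFin.symm ((1:Fin 3), Equiv.Perm.decomposeFin.symm ((1:Fin 2), 1)))) (1:Fin 4) = 0 from by decide),
    (show (Equiv.Perm.decomposeFin.symm ((2:Fin 4), Equiv.Perm.decomposeFin.symm ((1:Fin 3), Equiv.Perm.decomposeFin.symm ((1:Fin 2), 1)))) (2:Fin 4) = 3 from by decide),
    (show (Equiv.Perm.decomposeFin.symm ((2:Fin 4), Equiv.Perm.decomposeFin.symm ((1:Fin 3), Equiv.Perm.decomposeFin.symm ((1:Fin 2), 1)))) (3:Fin 4) = 1 from by decide),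
    (show Equiv.Perm.sign (Equiv.Perm.decomposeFin.symm ((2:Fin 4), Equiv.Perm.decomposeFin.symm ((2:Fin 3), Equiv.Perm.decomposeFin.symm ((0:Fin 2), 1)))) = 1 from by decide),
    (show (Equiv.Perm.decomposeFin.symm ((2:Fin 4), Equiv.Perm.decomposeFin.symm ((2:Fin 3), Equiv.Perm.decomposeFin.symm ((0:Fin 2), 1)))) (0:Fin 4) = 2 from by decide),
    (show (Equiv.Perm.decomposeFin.symm ((2:Fin 4), Equiv.Perm.decomposeFin.symm ((2:Fin 3), Equiv.Perm.decomposeFin.symm ((0:Fin 2), 1)))) (1:Fin 4) = 3 from by decide),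
    (show (Equiv.Perm.decomposeFin.symm ((2:Fin 4), Equiv.Perm.decomposeFin.symm ((2:Fin 3), Equiv.Perm.decomposeFin.symm ((0:Fin 2), 1)))) (2:Fin 4) = 0 from by decide),
    (show (Equiv.Perm.decomposeFin.symm ((2:Fin 4), Equiv.Perm.decomposeFin.symm ((2:Fin 3), Equiv.Perm.decomposeFin.symm ((0:Fin 2), 1)))) (3:Fin 4) = 1 from by decide),
    (show Equiv.Perm.sign (Equiv.Perm.decomposeFin.symm ((2:Fin 4), Equiv.Perm.decomposeFin.symm ((2:Fin 3), Equiv.Perm.decomposeFin.symm ((1:Fin 2), 1)))) = -1 from by decide),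
    (show (Equiv.Perm.decomposeFin.symm ((2:Fin 4), Equiv.Perm.decomposeFin.symm ((2:Fin 3), Equiv.Perm.decomposeFin.symm ((1:Fin 2), 1)))) (0:Fin 4) = 2 from by decide),
    (show (Equiv.Perm.decomposeFin.symm ((2:Fin 4), Equiv.Perm.decomposeFin.symm ((2:Fin 3), Equiv.Perm.decomposeFin.symm ((1:Fin 2), 1)))) (1:Fin 4) = 3 from by decide),
    (show (Equiv.Perm.decomposeFin.symm ((2:Fin 4), Equiv.Perm.decomposeFin.symm ((2:Fin 3), Equiv.Perm.decomposeFin.symm ((1:Fin 2), 1)))) (2:Fin 4) = 1 from by decide),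
    (show (Equiv.Perm.decomposeFin.symm ((2:Fin 4), Equiv.Perm.decomposeFin.symm ((2:Fin 3), Equiv.Perm.decomposeFin.symm ((1:Fin 2), 1)))) (3:Fin 4) = 0 from by decide),
    (show Equiv.Perm.sign (Equiv.Perm.decomposeFin.symm ((3:Fin 4), Equiv.Perm.decomposeFin.symm ((0:Fin 3), Equiv.Perm.decomposeFin.symm ((0:Fin 2), 1)))) = -1 from by decide),
    (show (Equiv.Perm.decomposeFin.symm ((3:Fin 4), Equiv.Perm.decomposeFin.symm ((0:Fin 3), Equiv.Perm.decomposeFin.symm ((0:Fin 2), 1)))) (0:Fin 4) = 3 from by decide),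
    (show (Equiv.Perm.decomposeFin.symm ((3:Fin 4), Equiv.Perm.decomposeFin.symm ((0:Fin 3), Equiv.Perm.decomposeFin.symm ((0:Fin 2), 1)))) (1:Fin 4) = 1 from by decide),
    (show (Equiv.Perm.decomposeFin.symm ((3:Fin 4), Equiv.Perm.decomposeFin.symm ((0:Fin 3), Equiv.Perm.decomposeFin.symm ((0:Fin 2), 1)))) (2:Fin 4) = 2 from by decide),
    (show (Equiv.Perm.decomposeFin.symm ((3:Fin 4), Equiv.Perm.decomposeFin.symm ((0:Fin 3), Equiv.Perm.decomposeFin.symm ((0:Fin 2), 1)))) (3:Fin 4) = 0 from by decide),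
    (show Equiv.Perm.sign (Equiv.Perm.decomposeFin.symm ((3:Fin 4), Equiv.Perm.decomposeFin.symm ((0:Fin 3), Equiv.Perm.decomposeFin.symm ((1:Fin 2), 1)))) = 1 from by decide),
    (show (Equiv.Perm.decomposeFin.symm ((3:Fin 4), Equiv.Perm.decomposeFin.symm ((0:Fin 3), Equiv.Perm.decomposeFin.symm ((1:Fin 2), 1)))) (0:Fin 4) = 3 from by decide),
    (show (Equiv.Perm.decomposeFin.symm ((3:Fin 4), Equiv.Perm.decomposeFin.symm ((0:Fin 3), Equiv.Perm.decomposeFin.symm ((1:Fin 2), 1)))) (1:Fin 4) = 1 from by decide),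
    (show (Equiv.Perm.decomposeFin.symm ((3:Fin 4), Equiv.Perm.decomposeFin.symm ((0:Fin 3), Equiv.Perm.decomposeFin.symm ((1:Fin 2), 1)))) (2:Fin 4) = 0 from by decide),
    (show (Equiv.Perm.decomposeFin.symm ((3:Fin 4), Equiv.Perm.decomposeFin.symm ((0:Fin 3), Equiv.Perm.decomposeFin.symm ((1:Fin 2), 1)))) (3:Fin 4) = 2 from by decide),
    (show Equiv.Perm.sign (Equiv.Perm.decomposeFin.symm ((3:Fin 4), Equiv.Perm.decomposeFin.symm ((1:Fin 3), Equiv.Perm.decomposeFin.symm ((0:Fin 2), 1)))) = 1 from by decide),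
    (show (Equiv.Perm.decomposeFin.symm ((3:Fin 4), Equiv.Perm.decomposeFin.symm ((1:Fin 3), Equiv.Perm.decomposeFin.symm ((0:Fin 2), 1)))) (0:Fin 4) = 3 from by decide),
    (show (Equiv.Perm.decomposeFin.symm ((3:Fin 4), Equiv.Perm.decomposeFin.symm ((1:Fin 3), Equiv.Perm.decomposeFin.symm ((0:Fin 2), 1)))) (1:Fin 4) = 2 from by decide),
    (show (Equiv.Perm.decomposeFin.symm ((3:Fin 4), Equiv.Perm.decomposeFin.symm ((1:Fin 3), Equiv.Perm.decomposeFin.symm ((0:Fin 2), 1)))) (2:Fin 4) = 1 from by decide),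
    (show (Equiv.Perm.decomposeFin.symm ((3:Fin 4), Equiv.Perm.decomposeFin.symm ((1:Fin 3), Equiv.Perm.decomposeFin.symm ((0:Fin 2), 1)))) (3:Fin 4) = 0 from by decide),
    (show Equiv.Perm.sign (Equiv.Perm.decomposeFin.symm ((3:Fin 4), Equiv.Perm.decomposeFin.symm ((1:Fin 3), Equiv.Perm.decomposeFin.symm ((1:Fin 2), 1)))) = -1 from by decide),
    (show (Equiv.Perm.decomposeFin.symm ((3:Fin 4), Equiv.Perm.decomposeFin.symm ((1:Fin 3), Equiv.Perm.decomposeFin.symm ((1:Fin 2), 1)))) (0:Fin 4) = 3 from by decide),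
    (show (Equiv.Perm.decomposeFin.symm ((3:Fin 4), Equiv.Perm.decomposeFin.symm ((1:Fin 3), Equiv.Perm.decomposeFin.symm ((1:Fin 2), 1)))) (1:Fin 4) = 2 from by decide),
    (show (Equiv.Perm.decomposeFin.symm ((3:Fin 4), Equiv.Perm.decomposeFin.symm ((1:Fin 3), Equiv.Perm.decomposeFin.symm ((1:Fin 2), 1)))) (2:Fin 4) = 0 from by decide),
    (show (Equiv.Perm.decomposeFin.symm ((3:Fin 4), Equiv.Perm.decomposeFin.symm ((1:Fin 3), Equiv.Perm.decomposeFin.symm ((1:Fin 2), 1)))) (3:Fin 4) = 1 from by decide),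
    (show Equiv.Perm.sign (Equiv.Perm.decomposeFin.symm ((3:Fin 4), Equiv.Perm.decomposeFin.symm ((2:Fin 3), Equiv.Perm.decomposeFin.symm ((0:Fin 2), 1)))) = 1 from by decide),
    (show (Equiv.Perm.decomposeFin.symm ((3:Fin 4), Equiv.Perm.decomposeFin.symm ((2:Fin 3), Equiv.Perm.decomposeFin.symm ((0:Fin 2), 1)))) (0:Fin 4) = 3 from by decide),
    (show (Equiv.Perm.decomposeFin.symm ((3:Fin 4), Equiv.Perm.decomposeFin.symm ((2:Fin 3), Equiv.Perm.decomposeFin.symm ((0:Fin 2), 1)))) (1:Fin 4) = 0 from by decide),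
    (show (Equiv.Perm.decomposeFin.symm ((3:Fin 4), Equiv.Perm.decomposeFin.symm ((2:Fin 3), Equiv.Perm.decomposeFin.symm ((0:Fin 2), 1)))) (2:Fin 4) = 2 from by decide),
    (show (Equiv.Perm.decomposeFin.symm ((3:Fin 4), Equiv.Perm.decomposeFin.symm ((2:Fin 3), Equiv.Perm.decomposeFin.symm ((0:Fin 2), 1)))) (3:Fin 4) = 1 from by decide),
    (show Equiv.Perm.sign (Equiv.Perm.decomposeFin.symm ((3:Fin 4), Equiv.Perm.decomposeFin.symm ((2:Fin 3), Equiv.Perm.decomposeFin.symm ((1:Fin 2), 1)))) = -1 from by decide),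
    (show (Equiv.Perm.decomposeFin.symm ((3:Fin 4), Equiv.Perm.decomposeFin.symm ((2:Fin 3), Equiv.Perm.decomposeFin.symm ((1:Fin 2), 1)))) (0:Fin 4) = 3 from by decide),
    (show (Equiv.Perm.decomposeFin.symm ((3:Fin 4), Equiv.Perm.decomposeFin.symm ((2:Fin 3), Equiv.Perm.decomposeFin.symm ((1:Fin 2), 1)))) (1:Fin 4) = 0 from by decide),
    (show (Equiv.Perm.decomposeFin.symm ((3:Fin 4), Equiv.Perm.decomposeFin.symm ((2:Fin 3), Equiv.Perm.decomposeFin.symm ((1:Fin 2), 1)))) (2:Fin 4) = 1 from by decide),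
    (show (Equiv.Perm.decomposeFin.symm ((3:Fin 4), Equiv.Perm.decomposeFin.symm ((2:Fin 3), Equiv.Perm.decomposeFin.symm ((1:Fin 2), 1)))) (3:Fin 4) = 2 from by decide)
    ]
  push_cast
  ring

variable {n : ℕ}

/-- The core alternating sum. -/
def Wf (n : ℕ) (A : Module.End ℝ (Vq n)) (v : Fin 4 → Vq n) : ℝ :=
  ∑ σ : Equiv.Perm (Fin 4),
    ((Equiv.Perm.sign σ : ℤ) : ℝ) * (⟪A (v (σ 0)), v (σ 1)⟫ * ⟪A (v (σ 2)), v (σ 3)⟫)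

lemma wedgeF_eq (A : Module.End ℝ (Vq n)) (f : (Fin 2 → Vq n) → ℝ)
    (hf : ∀ y, f y = ⟪A (y 0), y 1⟫) (v : Fin 4 → Vq n) :
    wedgeF f f v = (4 : ℝ)⁻¹ * Wf n A v := by
  have h0 : Fin.castAdd 2 (0 : Fin 2) = (0 : Fin 4) := by decide
  have h1 : Fin.castAdd 2 (1 : Fin 2) = (1 : Fin 4) := by decide
  have h2 : Fin.natAdd 2 (0 : Fin 2) = (2 : Fin 4) := by decide
  have h3 : Fin.natAdd 2 (1 : Fin 2) = (3 : Fin 4) := by decide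
  simp only [wedgeF, Wf, h0, h1, h2, h3, hf]
  norm_num [Nat.factorial]

lemma PhiqK_eq (v : Fin 4 → Vq n) :
    PhiqK n v = (4 : ℝ)⁻¹ * Wf n (Iq n) v + (4 : ℝ)⁻¹ * Wf n (Jq n) v
      + (4 : ℝ)⁻¹ * Wf n (Kq n) v := by
  rw [PhiqK, wedgeF_eq (Iq n) (omIf n) (fun y => rfl), wedgeF_eq (Jq n) (omJf n) (fun y => rfl),
    wedgeF_eq (Kq n) (omKf n) (fun y => rfl)]

/-- The basic product of two inner products. -/
def TT (A : Module.End ℝ (Vq n)) (u : Fin 4 → Vq n) : ℝ :=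
  ⟪A (u 0), u 1⟫ * ⟪A (u 2), u 3⟫

lemma TT_add [inst : DecidableEq (Fin 4)] (A : Module.End ℝ (Vq n)) (u : Fin 4 → Vq n) (j : Fin 4)
    (a b : Vq n) :
    TT A (Function.update u j (a + b))
      = TT A (Function.update u j a) + TT A (Function.update u j b) := by
  obtain rfl : inst = instDecidableEqFin 4 := Subsingleton.elim _ _
  fin_cases j <;>
    simp (config := { decide := true }) [TT, Function.update_apply, inner_add_left,
      inner_add_right, map_add] <;>
    ring

lemma TT_smul [inst : DecidableEq (Fin 4)] (A : Module.End ℝ (Vq n)) (u : Fin 4 → Vq n) (j : Fin 4)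
    (c : ℝ) (a : Vq n) :
    TT A (Function.update u j (c • a)) = c * TT A (Function.update u j a) := by
  obtain rfl : inst = instDecidableEqFin 4 := Subsingleton.elim _ _
  fin_cases j <;>
    simp (config := { decide := true }) [TT, Function.update_apply, real_inner_smul_left,
      real_inner_smul_right, map_smul, -PiLp.inner_apply] <;>
    ring

lemma Wf_eq_TT (A : Module.End ℝ (Vq n)) (v : Fin 4 → Vq n) :
    Wf n A v = ∑ σ : Equiv.Perm (Fin 4), ((Equiv.Perm.sign σ : ℤ) : ℝ) * TT A (v ∘ σ) := rfl

lemma Wf_update_add [DecidableEq (Fin 4)] (A : Module.End ℝ (Vq n)) (v : Fin 4 → Vq n)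
    (i : Fin 4) (a b : Vq n) :
    Wf n A (Function.update v i (a + b))
      = Wf n A (Function.update v i a) + Wf n A (Function.update v i b) := by
  simp only [Wf_eq_TT]
  rw [← Finset.sum_add_distrib]
  refine Finset.sum_congr rfl fun σ _ => ?_
  have hc : ∀ w : Vq n, (Function.update v i w) ∘ σ
      = Function.update (v ∘ σ) (σ.symm i) w := fun w => Function.update_comp_equiv v σ i w
  rw [hc, hc, hc, TT_add]
  ring

lemma Wf_update_smul [DecidableEq (Fin 4)] (A : Module.End ℝ (Vq n)) (v : Fin 4 → Vq n)
    (i : Fin 4) (c : ℝ) (a : Vq n) :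
    Wf n A (Function.update v i (c • a)) = c * Wf n A (Function.update v i a) := by
  simp only [Wf_eq_TT]
  rw [Finset.mul_sum]
  refine Finset.sum_congr rfl fun σ _ => ?_
  have hc : ∀ w : Vq n, (Function.update v i w) ∘ σ
      = Function.update (v ∘ σ) (σ.symm i) w := fun w => Function.update_comp_equiv v σ i w
  rw [hc, hc, TT_smul]
  ring

/-- `Φ_qK` as a bundled multilinear map. -/
def Pm (n : ℕ) : MultilinearMap ℝ (fun _ : Fin 4 => Vq n) ℝ where
  toFun := PhiqK n
  map_update_add' v i a b := by
    simp only [PhiqK_eq, Wf_update_add]; ring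
  map_update_smul' v i c a := by
    simp only [PhiqK_eq, Wf_update_smul, smul_eq_mul]; ring

lemma Pm_apply (v : Fin 4 → Vq n) : Pm n v = PhiqK n v := rfl

end Aux

section Aux2

variable {n : ℕ}

/-- The standard orthonormal basis of `Vq n`. -/
def bq (n : ℕ) : OrthonormalBasis (Fin 4 × Fin n) ℝ (Vq n) :=
  EuclideanSpace.basisFun _ ℝ

lemma bq_inner (p q : Fin 4 × Fin n) : ⟪bq n p, bq n q⟫ = if p = q then (1 : ℝ) else 0 :=
  orthonormal_iff_ite.mp (bq n).orthonormal p q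

lemma inner_A_bq (A4 : Matrix (Fin 4) (Fin 4) ℝ) (p q : Fin 4 × Fin n) :
    ⟪(Matrix.toEuclideanLin (A4 ⊗ₖ (1 : Matrix (Fin n) (Fin n) ℝ))) (bq n p), bq n q⟫
      = A4 q.1 p.1 * (if q.2 = p.2 then 1 else 0) := by
  rw [bq, EuclideanSpace.basisFun_apply, EuclideanSpace.basisFun_apply,
    EuclideanSpace.inner_single_right]
  have : (Matrix.toEuclideanLin (A4 ⊗ₖ (1 : Matrix (Fin n) (Fin n) ℝ))
      (EuclideanSpace.single p 1)) q
      = Matrix.mulVec (A4 ⊗ₖ (1 : Matrix (Fin n) (Fin n) ℝ))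
          (WithLp.equiv 2 _ (EuclideanSpace.single p (1 : ℝ))) q := rfl
  rw [this]
  simp [Matrix.mulVec, dotProduct, EuclideanSpace.single_apply, mul_ite, mul_one,
    mul_zero, ite_mul, zero_mul, one_mul, Finset.sum_ite_eq', Matrix.one_apply]

lemma Wf_basis (A : Module.End ℝ (Vq n)) (v : Fin 4 → Vq n) :
    Wf n A v = ⟪A (v 0), v 1⟫ * ⟪A (v 2), v 3⟫ - ⟪A (v 0), v 1⟫ * ⟪A (v 3), v 2⟫ - ⟪A (v 0), v 2⟫ * ⟪A (v 1), v 3⟫ + ⟪A (v 0), v 2⟫ * ⟪A (v 3), v 1⟫ - ⟪A (v 0), v 3⟫ * ⟪A (v 2), v 1⟫ + ⟪A (v 0), v 3⟫ * ⟪A (v 1), v 2⟫ - ⟪A (v 1), v 0⟫ * ⟪A (v 2), v 3⟫ + ⟪A (v 1), v 0⟫ * ⟪A (v 3), v 2⟫ + ⟪A (v 1), v 2⟫ * ⟪A (v 0), v 3⟫ - ⟪A (v 1), v 2⟫ * ⟪A (v 3), v 0⟫ + ⟪A (v 1), v 3⟫ * ⟪A (v 2), v 0⟫ - ⟪A (v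 1), v 3⟫ * ⟪A (v 0), v 2⟫ - ⟪A (v 2), v 1⟫ * ⟪A (v 0), v 3⟫ + ⟪A (v 2), v 1⟫ * ⟪A (v 3), v 0⟫ + ⟪A (v 2), v 0⟫ * ⟪A (v 1), v 3⟫ - ⟪A (v 2), v 0⟫ * ⟪A (v 3), v 1⟫ + ⟪A (v 2), v 3⟫ * ⟪A (v 0), v 1⟫ - ⟪A (v 2), v 3⟫ * ⟪A (v 1), v 0⟫ - ⟪A (v 3), v 1⟫ * ⟪A (v 2), v 0⟫ + ⟪A (v 3), v 1⟫ * ⟪A (v 0), v 2⟫ + ⟪A (v 3), v 2⟫ * ⟪A (v 1), v 0⟫ - ⟪A (v 3), v 2⟫ * ⟪A (v 0), v 1⟫ + ⟪A (v 3), v 0⟫ * ⟪A (v 2), v 1⟫ - ⟪A (v 3), v 0⟫ * ⟪A (v 1), v 2⟫ := by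
  have h := Wsum (fun a b => ⟪A (v a), v b⟫) (fun a b => ⟪A (v a), v b⟫)
  unfold Wf
  exact h

lemma parseval_x (x : Vq n ≃ₗᵢ[ℝ] Vq n) (u u' : Vq n) :
    ∑ p : Fin 4 × Fin n, ⟪u, x (bq n p)⟫ * ⟪u', x (bq n p)⟫ = ⟪u, u'⟫ := by
  have h1 : ∀ w : Vq n, ∀ p : Fin 4 × Fin n, ⟪w, x (bq n p)⟫ = ⟪x.symm w, bq n p⟫ := by
    intro w p
    rw [← x.inner_map_map (x.symm w) (bq n p), x.apply_symm_apply]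
  simp_rw [h1]
  calc ∑ p : Fin 4 × Fin n, ⟪x.symm u, bq n p⟫ * ⟪x.symm u', bq n p⟫
      = ∑ p : Fin 4 × Fin n, ⟪x.symm u, bq n p⟫ * ⟪bq n p, x.symm u'⟫ := by
        refine Finset.sum_congr rfl fun p _ => ?_
        rw [real_inner_comm (x.symm u') (bq n p)]
    _ = ⟪x.symm u, x.symm u'⟫ := (bq n).sum_inner_mul_inner (x.symm u) (x.symm u')
    _ = ⟪u, u'⟫ := x.symm.inner_map_map u u'

lemma Pm_expand (w : Fin 4 → Vq n) :
    Pm n w = ∑ m : Fin 4 → Fin 4 × Fin n,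
      (∏ k, ⟪bq n (m k), w k⟫) * Pm n (fun k => bq n (m k)) := by
  have hw : w = fun k => ∑ p : Fin 4 × Fin n, ⟪bq n p, w k⟫ • bq n p :=
    funext fun k => ((bq n).sum_repr' (w k)).symm
  conv_lhs => rw [hw]
  rw [(Pm n).map_sum]
  refine Finset.sum_congr rfl fun m _ => ?_
  calc Pm n (fun k => (⟪bq n (m k), w k⟫ : ℝ) • bq n (m k))
      = (∏ k, ⟪bq n (m k), w k⟫) • Pm n (fun k => bq n (m k)) := (Pm n).map_smul_univ _ _
    _ = (∏ k, ⟪bq n (m k), w k⟫) * Pm n (fun k => bq n (m k)) := by rw [smul_eq_mul]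

lemma inv_sum (x : Vq n ≃ₗᵢ[ℝ] Vq n) :
    ∑ m : Fin 4 → Fin 4 × Fin n, (Pm n (fun k => x (bq n (m k)))) ^ 2
      = ∑ m : Fin 4 → Fin 4 × Fin n, (Pm n (fun k => bq n (m k))) ^ 2 := by
  set P : (Fin 4 → Fin 4 × Fin n) → ℝ := fun j => Pm n (fun k => bq n (j k)) with hP
  have expand : ∀ m : Fin 4 → Fin 4 × Fin n, Pm n (fun k => x (bq n (m k)))
      = ∑ j : Fin 4 → Fin 4 × Fin n, (∏ k, ⟪bq n (j k), x (bq n (m k))⟫) * P j :=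
    fun m => Pm_expand _
  calc ∑ m : Fin 4 → Fin 4 × Fin n, (Pm n (fun k => x (bq n (m k)))) ^ 2
      = ∑ m : Fin 4 → Fin 4 × Fin n, ∑ j : Fin 4 → Fin 4 × Fin n,
          ∑ j' : Fin 4 → Fin 4 × Fin n,
          ((∏ k, ⟪bq n (j k), x (bq n (m k))⟫) * P j)
            * ((∏ k, ⟪bq n (j' k), x (bq n (m k))⟫) * P j') := by
        simp_rw [expand, sq, Finset.sum_mul_sum]
    _ = ∑ j : Fin 4 → Fin 4 × Fin n, ∑ j' : Fin 4 → Fin 4 × Fin n, (P j * P j')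
          * ∑ m : Fin 4 → Fin 4 × Fin n,
              ∏ k, (⟪bq n (j k), x (bq n (m k))⟫ * ⟪bq n (j' k), x (bq n (m k))⟫) := by
        rw [Finset.sum_comm]
        refine Finset.sum_congr rfl fun j _ => ?_
        rw [Finset.sum_comm]
        refine Finset.sum_congr rfl fun j' _ => ?_
        rw [Finset.mul_sum]
        refine Finset.sum_congr rfl fun m _ => ?_
        rw [Finset.prod_mul_distrib]
        ring
    _ = ∑ j : Fin 4 → Fin 4 × Fin n, ∑ j' : Fin 4 → Fin 4 × Fin n, (P j * P j')
          * (if j = j' then 1 else 0) := by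
        refine Finset.sum_congr rfl fun j _ => Finset.sum_congr rfl fun j' _ => ?_
        congr 1
        rw [← Fintype.piFinset_univ]
        have hps := Finset.prod_univ_sum (fun _ : Fin 4 => (Finset.univ : Finset (Fin 4 × Fin n)))
          (fun k p => (⟪bq n (j k), x (bq n p)⟫ * ⟪bq n (j' k), x (bq n p)⟫ : ℝ))
        rw [← hps]
        calc ∏ k : Fin 4, ∑ p : Fin 4 × Fin n,
              (⟪bq n (j k), x (bq n p)⟫ * ⟪bq n (j' k), x (bq n p)⟫)
            = ∏ k : Fin 4, ⟪bq n (j k), bq n (j' k)⟫ :=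
              Finset.prod_congr rfl fun k _ => parseval_x x _ _
          _ = ∏ k : Fin 4, (if j k = j' k then (1 : ℝ) else 0) :=
              Finset.prod_congr rfl fun k _ => bq_inner _ _
          _ = if j = j' then 1 else 0 := by
              by_cases hjj : j = j'
              · simp [hjj]
              · obtain ⟨k, hk⟩ := Function.ne_iff.mp hjj
                rw [if_neg hjj]
                exact Finset.prod_eq_zero (Finset.mem_univ k) (if_neg hk)
    _ = ∑ j : Fin 4 → Fin 4 × Fin n, P j ^ 2 := by
        refine Finset.sum_congr rfl fun j _ => ?_
        simp_rw [mul_ite, mul_one, mul_zero]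
        rw [Finset.sum_ite_eq]
        simp [sq]

lemma Phi_frame (z : Fin n) : PhiqK n (fun k : Fin 4 => bq n (k, z)) = 6 := by
  have hI : ∀ a b : Fin 4, ⟪(Iq n) (bq n (a, z)), bq n (b, z)⟫ = I4 b a := fun a b => by
    have := inner_A_bq (n := n) I4 (a, z) (b, z)
    simpa [Iq] using this
  have hJ : ∀ a b : Fin 4, ⟪(Jq n) (bq n (a, z)), bq n (b, z)⟫ = J4 b a := fun a b => by
    have := inner_A_bq (n := n) J4 (a, z) (b, z)
    simpa [Jq] using this
  have hK : ∀ a b : Fin 4, ⟪(Kq n) (bq n (a, z)), bq n (b, z)⟫ = K4 b a := fun a b => by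
    have := inner_A_bq (n := n) K4 (a, z) (b, z)
    simpa [Kq] using this
  have wI : Wf n (Iq n) (fun k : Fin 4 => bq n (k, z)) = 8 := by
    rw [Wf_basis]
    simp only [hI]
    norm_num [I4, Matrix.vecHead, Matrix.vecTail, Function.comp, Matrix.of_apply, Matrix.cons_val_zero, Matrix.cons_val_one, Matrix.cons_val_two, Matrix.cons_val_three]
  have wJ : Wf n (Jq n) (fun k : Fin 4 => bq n (k, z)) = 8 := by
    rw [Wf_basis]
    simp only [hJ]
    norm_num [J4, Matrix.vecHead, Matrix.vecTail, Function.comp, Matrix.of_apply, Matrix.cons_val_zero, Matrix.cons_val_one, Matrix.cons_val_two, Matrix.cons_val_three]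
  have wK : Wf n (Kq n) (fun k : Fin 4 => bq n (k, z)) = 8 := by
    rw [Wf_basis]
    simp only [hK]
    norm_num [K4, Matrix.vecHead, Matrix.vecTail, Function.comp, Matrix.of_apply, Matrix.cons_val_zero, Matrix.cons_val_one, Matrix.cons_val_two, Matrix.cons_val_three]
  rw [PhiqK_eq, wI, wJ, wK]
  norm_num

end Aux2
/-- If an orthogonal transformation `x` of `ℝ^{4n}` satisfies `Φ_qK ∘ x = λ · Φ_qK`,
then `λ = 1` or `λ = −1`. -/
theorem statement10 (n : ℕ) (hn : 1 ≤ n) (x : Vq n ≃ₗᵢ[ℝ] Vq n) (lam : ℝ)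
    (h : ∀ v : Fin 4 → Vq n, PhiqK n (fun i => x (v i)) = lam * PhiqK n v) :
    lam = 1 ∨ lam = -1 := by
  classical
  have hx : ∀ m : Fin 4 → Fin 4 × Fin n,
      Pm n (fun k => x (bq n (m k))) = lam * Pm n (fun k => bq n (m k)) :=
    fun m => h fun k => bq n (m k)
  have hinv := inv_sum x
  have h2 : ∑ m : Fin 4 → Fin 4 × Fin n, (lam * Pm n (fun k => bq n (m k))) ^ 2
      = ∑ m : Fin 4 → Fin 4 × Fin n, (Pm n (fun k => bq n (m k))) ^ 2 := by
    rw [← hinv]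
    exact Finset.sum_congr rfl fun m _ => by rw [hx m]
  set S := ∑ m : Fin 4 → Fin 4 × Fin n, (Pm n (fun k => bq n (m k))) ^ 2 with hS
  have h3 : lam ^ 2 * S = S := by
    calc lam ^ 2 * S
        = ∑ m : Fin 4 → Fin 4 × Fin n, (lam * Pm n (fun k => bq n (m k))) ^ 2 := by
          rw [hS, Finset.mul_sum]
          exact Finset.sum_congr rfl fun m _ => by ring
      _ = S := h2
  have z : Fin n := ⟨0, hn⟩
  have h6 : (Pm n (fun k => bq n ((fun k : Fin 4 => (k, z)) k))) ^ 2 = 36 := by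
    have h66 : Pm n (fun k => bq n ((fun k : Fin 4 => (k, z)) k)) = 6 := Phi_frame z
    rw [h66]; norm_num
  have hSpos : 0 < S := by
    have hle : (36 : ℝ) ≤ S := by
      rw [← h6, hS]
      exact Finset.single_le_sum
        (f := fun m : Fin 4 → Fin 4 × Fin n => (Pm n (fun k => bq n (m k))) ^ 2)
        (fun m _ => sq_nonneg _) (Finset.mem_univ _)
    linarith
  have hl2 : lam ^ 2 = 1 := by
    have := mul_right_cancel₀ (ne_of_gt hSpos) (h3.trans (one_mul S).symm)
    linarith [this]
  have h5 : (lam - 1) * (lam + 1) = 0 := by nlinarith [hl2]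
  rcases mul_eq_zero.mp h5 with h' | h'
  · left; linarith
  · right; linarith
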